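/- Assume that every C₃*-critical signed graph on fewer than n vertices Ĝ′ satisfies ρ(Ĝ′) ≤ 1, and let Ĝ be a C₃*-critical signed graph on n vertices with ρ(Ĝ) ≥ 2. If a 4-cycle C of Ĝ contains a vertex of degree 2, then C is negative. -/

import Mathlib

/-- A signed graph: a vertex type with a symmetric positive-edge relation and a
symmetric negative-edge relation (loops and "digons" are allowed). -/
structure SignedGraph (V : Type*) where
  pos : V → V → Prop
  neg : V → V → Prop
  pos_symm : Symmetric pos
  neg_symm : Symmetric neg

namespace SignedGraph

variable {V W : Type*}

/-- Switching at the vertex set `{v | s v = true}`: signs of edges with exactly one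
endpoint in the set are flipped; loops and edges with both or no endpoints in the
set are unchanged. -/
def switch (G : SignedGraph V) (s : V → Bool) : SignedGraph V where
  pos u v := if s u = s v then G.pos u v else G.neg u v
  neg u v := if s u = s v then G.neg u v else G.pos u v
  pos_symm := by
    intro u v h
    by_cases hs : s u = s v
    · rw [if_pos hs] at h; rw [if_pos hs.symm]; exact G.pos_symm h
    · rw [if_neg hs] at h; rw [if_neg (fun e => hs e.symm)]; exact G.neg_symm h
  neg_symm := by
    intro u v h
    by_cases hs : s u = s v
    · rw [if_pos hs] at h; rw [if_pos hs.symm]; exact G.neg_symm h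
    · rw [if_neg hs] at h; rw [if_neg (fun e => hs e.symm)]; exact G.pos_symm h

/-- An edge-sign preserving homomorphism maps positive edges to positive edges and
negative edges to negative edges. -/
def IsESPHom (G : SignedGraph V) (H : SignedGraph W) (φ : V → W) : Prop :=
  (∀ u v, G.pos u v → H.pos (φ u) (φ v)) ∧ (∀ u v, G.neg u v → H.neg (φ u) (φ v))

/-- A signed graph admits a homomorphism to another iff some switching of it admits
an edge-sign preserving homomorphism (this preserves adjacency and signs of closed
walks). -/
def HasHomTo (G : SignedGraph V) (H : SignedGraph W) : Prop :=
  ∃ (s : V → Bool) (φ : V → W), IsESPHom (G.switch s) H φ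

/-- `H` is a subgraph of `G` (on the same vertex set). -/
def IsSubgraph (H G : SignedGraph V) : Prop :=
  (∀ u v, H.pos u v → G.pos u v) ∧ (∀ u v, H.neg u v → G.neg u v)

/-- The number of edges of a finite signed graph (unordered pairs, each sign
counted separately). -/
noncomputable def edgeCount (G : SignedGraph V) : ℕ :=
  (Sym2.fromRel (r := G.pos) ⟨fun _ _ h => G.pos_symm h⟩).ncard +
    (Sym2.fromRel (r := G.neg) ⟨fun _ _ h => G.neg_symm h⟩).ncard

/-- The degree of a vertex: the number of its neighbours (via an edge of either sign). -/
noncomputable def degree (G : SignedGraph V) (v : V) : ℕ :=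
  {u | G.pos v u ∨ G.neg v u}.ncard

/-- The underlying simple graph of a signed graph (loops discarded). -/
def underlying (G : SignedGraph V) : SimpleGraph V :=
  SimpleGraph.fromRel (fun u v => G.pos u v ∨ G.neg u v)

end SignedGraph

/-- `C₃*`: the all-positive triangle with a negative loop at each vertex. -/
def C3star : SignedGraph (Fin 3) where
  pos u v := u ≠ v
  neg u v := u = v
  pos_symm := fun _ _ h => h.symm
  neg_symm := fun _ _ h => h.symm

/-- A signed graph is `C₃*`-critical: it has no digon and no positive loop (the
girth conditions of Definition 2.7), admits no homomorphism to `C₃*`, but every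
proper subgraph does. -/
def IsC3Critical {V : Type*} (G : SignedGraph V) : Prop :=
  (∀ u v, ¬ (G.pos u v ∧ G.neg u v)) ∧
  (∀ v, ¬ G.pos v v) ∧
  ¬ G.HasHomTo C3star ∧
  ∀ H : SignedGraph V, H.IsSubgraph G → H ≠ G → H.HasHomTo C3star

/-- Auxiliary: the signed graph obtained by deleting all edges incident to `a`. -/
def delVertex {V : Type*} (G : SignedGraph V) (a : V) : SignedGraph V where
  pos u v := G.pos u v ∧ a ≠ u ∧ a ≠ v
  neg u v := G.neg u v ∧ a ≠ u ∧ a ≠ v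
  pos_symm := fun _ _ h => ⟨G.pos_symm h.1, h.2.2, h.2.1⟩
  neg_symm := fun _ _ h => ⟨G.neg_symm h.1, h.2.2, h.2.1⟩

lemma aux_two_fin3 (p q : Fin 3) : ∃ x : Fin 3, x ≠ p ∧ x ≠ q := by
  revert p q; decide

lemma even_xor_aux (b1 b2 b3 b4 : Bool)
    (h : Even (b1.toNat + b2.toNat + b3.toNat + b4.toNat)) :
    xor (xor b1 b2) (xor b3 b4) = false := by
  revert h; cases b1 <;> cases b2 <;> cases b3 <;> cases b4 <;> decide

lemma bool_par_aux (s1 s2 s3 s4 sb sc sd : Bool)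
    (hev : xor (xor s1 s2) (xor s3 s4) = false)
    (hP : xor (xor s1 s4) (sb != sd) = true) :
    xor (xor s2 (sb != sc)) (xor s3 (sc != sd)) = true := by
  revert hev hP
  cases s1 <;> cases s2 <;> cases s3 <;> cases s4 <;> cases sb <;> cases sc <;>
    cases sd <;> decide

lemma key_choice (s1 s4 sb sd : Bool) (pb pd : Fin 3)
    (h : xor (xor s1 s4) (sb != sd) = true → pb ≠ pd) :
    ∃ (β : Bool) (x : Fin 3),
      (if xor s1 (β != sb) then x = pb else x ≠ pb) ∧
      (if xor s4 (sd != β) then x = pd else x ≠ pd) := by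
  by_cases hP : xor (xor s1 s4) (sb != sd) = true
  · refine ⟨if s1 then sb else !sb, pb, ?_, ?_⟩
    · have ht : xor s1 ((if s1 then sb else !sb) != sb) = true := by
        cases s1 <;> cases sb <;> rfl
      simp [ht]
    · have ht : xor s4 (sd != (if s1 then sb else !sb)) = false := by
        revert hP; cases s1 <;> cases s4 <;> cases sb <;> cases sd <;> decide
      simp [ht]; exact h hP
  · obtain ⟨x, hx1, hx2⟩ := aux_two_fin3 pb pd
    refine ⟨if s1 then !sb else sb, x, ?_, ?_⟩
    · have ht : xor s1 ((if s1 then !sb else sb) != sb) = false := by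
        cases s1 <;> cases sb <;> rfl
      simp [ht]; exact hx1
    · have ht : xor s4 (sd != (if s1 then !sb else sb)) = false := by
        revert hP; cases s1 <;> cases s4 <;> cases sb <;> cases sd <;> decide
      simp [ht]; exact hx2

/-- Suppose every `C₃*`-critical signed graph on fewer vertices has potential
`ρ = 3v − 2e ≤ 1`, and `Ĝ` is a `C₃*`-critical signed graph with `ρ(Ĝ) ≥ 2`. If a
`4`-cycle `a b c d` of `Ĝ` (with edge signs `s₁,…,s₄`, `true` = negative) contains a
vertex `a` of degree `2`, then the cycle is negative (it has an odd number of
negative edges). -/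
theorem four_cycle_through_two_vertex_is_negative {V : Type*} [Fintype V]
    (G : SignedGraph V)
    (hmin : ∀ m : ℕ, m < Fintype.card V → ∀ G' : SignedGraph (Fin m),
      IsC3Critical G' → 3 * (m : ℤ) - 2 * (G'.edgeCount : ℤ) ≤ 1)
    (hcrit : IsC3Critical G)
    (hpot : 2 ≤ 3 * (Fintype.card V : ℤ) - 2 * (G.edgeCount : ℤ))
    (a b c d : V)
    (hab : a ≠ b) (hac : a ≠ c) (had : a ≠ d) (hbc : b ≠ c) (hbd : b ≠ d)
    (hcd : c ≠ d)
    (s1 s2 s3 s4 : Bool)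
    (e1 : if s1 then G.neg a b else G.pos a b)
    (e2 : if s2 then G.neg b c else G.pos b c)
    (e3 : if s3 then G.neg c d else G.pos c d)
    (e4 : if s4 then G.neg d a else G.pos d a)
    (hdeg : G.degree a = 2) :
    ¬ Even (s1.toNat + s2.toNat + s3.toNat + s4.toNat) := by
  intro hEven
  classical
  obtain ⟨hdig, hloop, hnohom, hsubhom⟩ := hcrit
  -- the neighbourhood of `a` is exactly `{b, d}`
  have e4' : if s4 then G.neg a d else G.pos a d := by
    cases s4 with
    | true => rw [if_pos rfl] at e4 ⊢; exact G.neg_symm e4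
    | false => rw [if_neg (by simp)] at e4 ⊢; exact G.pos_symm e4
  have hbS : b ∈ {u | G.pos a u ∨ G.neg a u} := by
    cases s1 with
    | true => rw [if_pos rfl] at e1; exact Or.inr e1
    | false => rw [if_neg (by simp)] at e1; exact Or.inl e1
  have hdS : d ∈ {u | G.pos a u ∨ G.neg a u} := by
    cases s4 with
    | true => rw [if_pos rfl] at e4'; exact Or.inr e4'
    | false => rw [if_neg (by simp)] at e4'; exact Or.inl e4'
  have hsub : ({b, d} : Set V) ⊆ {u | G.pos a u ∨ G.neg a u} := by
    intro y hy
    rcases hy with rfl | rfl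
    · exact hbS
    · exact hdS
  have hSeq : ({b, d} : Set V) = {u | G.pos a u ∨ G.neg a u} := by
    apply Set.eq_of_subset_of_ncard_le hsub
    · have : ({u | G.pos a u ∨ G.neg a u} : Set V).ncard = 2 := hdeg
      rw [this, Set.ncard_pair hbd]
  have hE : ∀ v, G.pos a v ∨ G.neg a v → v = b ∨ v = d := by
    intro v hv
    have : v ∈ ({b, d} : Set V) := by rw [hSeq]; exact hv
    simpa using this
  -- sign uniqueness for the two edges at `a`
  have hab' : (G.pos a b → s1 = false) ∧ (G.neg a b → s1 = true) := by
    cases s1 with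
    | true =>
      rw [if_pos rfl] at e1
      exact ⟨fun h => absurd ⟨h, e1⟩ (hdig a b), fun _ => rfl⟩
    | false =>
      rw [if_neg (by simp)] at e1
      exact ⟨fun _ => rfl, fun h => absurd ⟨e1, h⟩ (hdig a b)⟩
  have had' : (G.pos a d → s4 = false) ∧ (G.neg a d → s4 = true) := by
    cases s4 with
    | true =>
      rw [if_pos rfl] at e4'
      exact ⟨fun h => absurd ⟨h, e4'⟩ (hdig a d), fun _ => rfl⟩
    | false =>
      rw [if_neg (by simp)] at e4'
      exact ⟨fun _ => rfl, fun h => absurd ⟨e4', h⟩ (hdig a d)⟩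
  -- the proper subgraph obtained by deleting the edges at `a` has a homomorphism
  have hsubH : (delVertex G a).IsSubgraph G := ⟨fun _ _ h => h.1, fun _ _ h => h.1⟩
  have hneH : delVertex G a ≠ G := by
    intro h
    have : (delVertex G a).pos a b ∨ (delVertex G a).neg a b := by
      rw [h]
      cases s1 with
      | true => rw [if_pos rfl] at e1; exact Or.inr e1
      | false => rw [if_neg (by simp)] at e1; exact Or.inl e1
    rcases this with h1 | h1 <;> exact h1.2.1 rfl
  obtain ⟨s, φ, hφp, hφn⟩ := hsubhom (delVertex G a) hsubH hneH
  -- images of the edges `bc` and `cd`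
  have himg : ∀ (u v : V) (t : Bool), a ≠ u → a ≠ v →
      (if t then G.neg u v else G.pos u v) →
      ((xor t (s u != s v) = true → φ u = φ v) ∧
       (xor t (s u != s v) = false → φ u ≠ φ v)) := by
    intro u v t hu hv he
    by_cases hsv : s u = s v
    · have hb' : (s u != s v) = false := by simp [hsv]
      cases t with
      | true =>
        rw [if_pos rfl] at he
        have hn : ((delVertex G a).switch s).neg u v := by
          show if s u = s v then (delVertex G a).neg u v else (delVertex G a).pos u v
          rw [if_pos hsv]; exact ⟨he, hu, hv⟩
        have himg2 := hφn u v hn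
        exact ⟨fun _ => himg2, fun hc => by rw [hb'] at hc; simp at hc⟩
      | false =>
        rw [if_neg (by simp)] at he
        have hp : ((delVertex G a).switch s).pos u v := by
          show if s u = s v then (delVertex G a).pos u v else (delVertex G a).neg u v
          rw [if_pos hsv]; exact ⟨he, hu, hv⟩
        have himg2 := hφp u v hp
        exact ⟨fun hc => by rw [hb'] at hc; simp at hc, fun _ => himg2⟩
    · have hb' : (s u != s v) = true := bne_iff_ne.mpr hsv
      cases t with
      | true =>
        rw [if_pos rfl] at he
        have hp : ((delVertex G a).switch s).pos u v := by
          show if s u = s v then (delVertex G a).pos u v else (delVertex G a).neg u v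
          rw [if_neg hsv]; exact ⟨he, hu, hv⟩
        have himg2 := hφp u v hp
        exact ⟨fun hc => by rw [hb'] at hc; simp at hc, fun _ => himg2⟩
      | false =>
        rw [if_neg (by simp)] at he
        have hn : ((delVertex G a).switch s).neg u v := by
          show if s u = s v then (delVertex G a).neg u v else (delVertex G a).pos u v
          rw [if_neg hsv]; exact ⟨he, hu, hv⟩
        have himg2 := hφn u v hn
        exact ⟨fun _ => himg2, fun hc => by rw [hb'] at hc; simp at hc⟩
  have hbc' := himg b c s2 hab hac e2
  have hcd' := himg c d s3 hac had e3
  -- positivity of the cycle relates the two relevant switched signs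
  have hev : xor (xor s1 s2) (xor s3 s4) = false := even_xor_aux s1 s2 s3 s4 hEven
  have hbd_cond : xor (xor s1 s4) ((s b) != (s d)) = true → φ b ≠ φ d := by
    intro hP
    have hσ := bool_par_aux s1 s2 s3 s4 (s b) (s c) (s d) hev hP
    by_cases h2 : xor s2 (s b != s c) = true
    · have h3 : xor s3 (s c != s d) = false := by
        revert hσ; rw [h2]; cases (xor s3 (s c != s d)) <;> simp
      have e12 := hbc'.1 h2
      have e23 := hcd'.2 h3
      rw [e12]; exact e23
    · have h2' : xor s2 (s b != s c) = false := by
        revert h2; cases (xor s2 (s b != s c)) <;> simp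
      have h3 : xor s3 (s c != s d) = true := by
        revert hσ; rw [h2']; cases (xor s3 (s c != s d)) <;> simp
      have e12 := hbc'.2 h2'
      have e23 := hcd'.1 h3
      rw [← e23]; exact e12
  obtain ⟨β, x, hx1, hx4⟩ := key_choice s1 s4 (s b) (s d) (φ b) (φ d) hbd_cond
  -- extend the homomorphism back to `a`, contradicting criticality
  apply hnohom
  refine ⟨Function.update s a β, Function.update φ a x, ?_, ?_⟩
  · -- positive edges
    have main_pos : ∀ v, v ≠ a → (G.switch (Function.update s a β)).pos a v →
        Function.update φ a x a ≠ Function.update φ a x v := by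
      intro v hv h
      have h' : if Function.update s a β a = Function.update s a β v
          then G.pos a v else G.neg a v := h
      rw [Function.update_self, Function.update_of_ne hv] at h'
      have hedge : G.pos a v ∨ G.neg a v := by
        by_cases hc : β = s v
        · rw [if_pos hc] at h'; exact Or.inl h'
        · rw [if_neg hc] at h'; exact Or.inr h'
      rw [Function.update_self, Function.update_of_ne hv]
      rcases hE v hedge with hvb | hvd
      · rw [hvb] at h' ⊢
        by_cases hβ : β = s b
        · rw [if_pos hβ] at h'
          have hs1 := hab'.1 h'
          have ht1 : xor s1 (β != s b) = false := by simp [hβ, hs1]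
          simpa [ht1] using hx1
        · rw [if_neg hβ] at h'
          have hs1 := hab'.2 h'
          have ht1 : xor s1 (β != s b) = false := by
            simp [hs1, bne_iff_ne.mpr hβ]
          simpa [ht1] using hx1
      · rw [hvd] at h' ⊢
        by_cases hβ : β = s d
        · rw [if_pos hβ] at h'
          have hs4 := had'.1 h'
          have ht4 : xor s4 (s d != β) = false := by simp [hβ, hs4]
          simpa [ht4] using hx4
        · rw [if_neg hβ] at h'
          have hs4 := had'.2 h'
          have ht4 : xor s4 (s d != β) = false := by
            have hne : (s d != β) = true := bne_iff_ne.mpr (fun e => hβ e.symm)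
            simp [hs4, hne]
          simpa [ht4] using hx4
    intro u v h
    by_cases hu : u = a
    · subst u
      by_cases hv : v = a
      · subst v
        have h' : if Function.update s a β a = Function.update s a β a
            then G.pos a a else G.neg a a := h
        rw [if_pos rfl] at h'
        exact absurd h' (hloop a)
      · exact main_pos v hv h
    · by_cases hv : v = a
      · subst v
        have := main_pos u hu ((G.switch (Function.update s a β)).pos_symm h)
        exact fun e => this e.symm
      · have h' : if Function.update s a β u = Function.update s a β v
            then G.pos u v else G.neg u v := h
        rw [Function.update_of_ne hu, Function.update_of_ne hv] at h'
        have hH : ((delVertex G a).switch s).pos u v := by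
          show if s u = s v then (delVertex G a).pos u v else (delVertex G a).neg u v
          by_cases hsv : s u = s v
          · rw [if_pos hsv] at h' ⊢
            exact ⟨h', fun e => hu e.symm, fun e => hv e.symm⟩
          · rw [if_neg hsv] at h' ⊢
            exact ⟨h', fun e => hu e.symm, fun e => hv e.symm⟩
        have := hφp u v hH
        show Function.update φ a x u ≠ Function.update φ a x v
        rwa [Function.update_of_ne hu, Function.update_of_ne hv]
  · -- negative edges
    have main_neg : ∀ v, v ≠ a → (G.switch (Function.update s a β)).neg a v →
        Function.update φ a x a = Function.update φ a x v := by
      intro v hv h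
      have h' : if Function.update s a β a = Function.update s a β v
          then G.neg a v else G.pos a v := h
      rw [Function.update_self, Function.update_of_ne hv] at h'
      have hedge : G.pos a v ∨ G.neg a v := by
        by_cases hc : β = s v
        · rw [if_pos hc] at h'; exact Or.inr h'
        · rw [if_neg hc] at h'; exact Or.inl h'
      rw [Function.update_self, Function.update_of_ne hv]
      rcases hE v hedge with hvb | hvd
      · rw [hvb] at h' ⊢
        by_cases hβ : β = s b
        · rw [if_pos hβ] at h'
          have hs1 := hab'.2 h'
          have ht1 : xor s1 (β != s b) = true := by simp [hβ, hs1]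
          simpa [ht1] using hx1
        · rw [if_neg hβ] at h'
          have hs1 := hab'.1 h'
          have ht1 : xor s1 (β != s b) = true := by
            simp [hs1, bne_iff_ne.mpr hβ]
          simpa [ht1] using hx1
      · rw [hvd] at h' ⊢
        by_cases hβ : β = s d
        · rw [if_pos hβ] at h'
          have hs4 := had'.2 h'
          have ht4 : xor s4 (s d != β) = true := by simp [hβ, hs4]
          simpa [ht4] using hx4
        · rw [if_neg hβ] at h'
          have hs4 := had'.1 h'
          have ht4 : xor s4 (s d != β) = true := by
            have hne : (s d != β) = true := bne_iff_ne.mpr (fun e => hβ e.symm)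
            simp [hs4, hne]
          simpa [ht4] using hx4
    intro u v h
    by_cases hu : u = a
    · subst u
      by_cases hv : v = a
      · subst v; rfl
      · exact main_neg v hv h
    · by_cases hv : v = a
      · subst v
        exact (main_neg u hu ((G.switch (Function.update s a β)).neg_symm h)).symm
      · have h' : if Function.update s a β u = Function.update s a β v
            then G.neg u v else G.pos u v := h
        rw [Function.update_of_ne hu, Function.update_of_ne hv] at h'
        have hH : ((delVertex G a).switch s).neg u v := by
          show if s u = s v then (delVertex G a).neg u v else (delVertex G a).pos u v
          by_cases hsv : s u = s v
          · rw [if_pos hsv] at h' ⊢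
            exact ⟨h', fun e => hu e.symm, fun e => hv e.symm⟩
          · rw [if_neg hsv] at h' ⊢
            exact ⟨h', fun e => hu e.symm, fun e => hv e.symm⟩
        have := hφn u v hH
        show Function.update φ a x u = Function.update φ a x v
        rwa [Function.update_of_ne hu, Function.update_of_ne hv]
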